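/- Let 𝓡 be a real-valued function defined on the set { (φ, θ) : 0 < φ ≤ θ < ∞ } such that: (a) 𝓡(φ, θ) ≥ 0 for all φ ≤ θ; (b) for every θ, the map φ ↦ 𝓡(φ, θ) is non-decreasing on (0, θ]; and (c) 2𝓡(φ, θ) − 𝓡(θ, θ) ≥ 0 for all φ ≤ θ. For M ∈ ℕ define 𝓡_M(φ, θ) = ( 2𝓡(φ, θ) − 𝓡(θ, θ) ) + (2/M)·( 𝓡(θ, θ) − 𝓡(φ, θ) ). Then for every M ∈ ℕ, the map φ ↦ inf_{θ ∈ [φ, ∞)} 𝓡_M(φ, θ) is non-decreasing on (0, ∞). (Monotonicity in the data aspect ratio of the limiting risk of the cross-validated bagged predictor that optimizes over the subsample aspect ratio.) -/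
import Mathlib


open Set

/-- Monotonicity in the data aspect ratio of the limiting risk of the cross-validated
bagged predictor optimizing over the subsample aspect ratio. -/
theorem cross_validated_bagged_risk_monotone
    (R : ℝ → ℝ → ℝ)
    (hnonneg : ∀ φ θ : ℝ, 0 < φ → φ ≤ θ → 0 ≤ R φ θ)
    (hmono : ∀ θ : ℝ, 0 < θ → MonotoneOn (fun φ => R φ θ) (Ioc 0 θ))
    (hc : ∀ φ θ : ℝ, 0 < φ → φ ≤ θ → 0 ≤ 2 * R φ θ - R θ θ)
    (RM : ℕ → ℝ → ℝ → ℝ)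
    (hRM : ∀ (M : ℕ) (φ θ : ℝ),
      RM M φ θ = (2 * R φ θ - R θ θ) + 2 / (M : ℝ) * (R θ θ - R φ θ)) :
    ∀ M : ℕ, 1 ≤ M → ∀ φ₁ φ₂ : ℝ, 0 < φ₁ → φ₁ ≤ φ₂ →
      sInf {x : ℝ | ∃ θ : ℝ, φ₁ ≤ θ ∧ x = RM M φ₁ θ}
        ≤ sInf {x : ℝ | ∃ θ : ℝ, φ₂ ≤ θ ∧ x = RM M φ₂ θ} := by
  intro M hM φ₁ φ₂ hφ₁ h12
  have hM' : (1 : ℝ) ≤ (M : ℝ) := by exact_mod_cast hM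
  have hMpos : (0 : ℝ) < (M : ℝ) := by linarith
  have hc1 : 0 < 2 / (M : ℝ) := by positivity
  have hc2 : 2 / (M : ℝ) ≤ 2 := by
    rw [div_le_iff₀ hMpos]; nlinarith
  have hφ₂ : 0 < φ₂ := lt_of_lt_of_le hφ₁ h12
  -- nonnegativity of RM for φ ≤ θ
  have hRMnn : ∀ φ θ : ℝ, 0 < φ → φ ≤ θ → 0 ≤ RM M φ θ := by
    intro φ θ hφ hθ
    have ha := hnonneg φ θ hφ hθ
    have hb := hc φ θ hφ hθ
    have hθθ := hnonneg θ θ (lt_of_lt_of_le hφ hθ) le_rfl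
    rw [hRM]
    nlinarith [mul_nonneg (sub_nonneg.2 hc2) ha,
      mul_nonneg hc1.le hb]
  -- monotonicity in φ
  have key : ∀ θ : ℝ, φ₂ ≤ θ → RM M φ₁ θ ≤ RM M φ₂ θ := by
    intro θ hθ
    have hθpos : 0 < θ := lt_of_lt_of_le hφ₂ hθ
    have hmem₁ : φ₁ ∈ Ioc (0:ℝ) θ := ⟨hφ₁, le_trans h12 hθ⟩
    have hmem₂ : φ₂ ∈ Ioc (0:ℝ) θ := ⟨hφ₂, hθ⟩
    have hR : R φ₁ θ ≤ R φ₂ θ := hmono θ hθpos hmem₁ hmem₂ h12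
    rw [hRM, hRM]
    nlinarith [mul_nonneg (sub_nonneg.2 hc2) (sub_nonneg.2 hR)]
  have hbdd : BddBelow {x : ℝ | ∃ θ : ℝ, φ₁ ≤ θ ∧ x = RM M φ₁ θ} := by
    refine ⟨0, ?_⟩
    rintro x ⟨θ, hθ, rfl⟩
    exact hRMnn φ₁ θ hφ₁ hθ
  have hne₂ : {x : ℝ | ∃ θ : ℝ, φ₂ ≤ θ ∧ x = RM M φ₂ θ}.Nonempty :=
    ⟨RM M φ₂ φ₂, φ₂, le_rfl, rfl⟩
  refine le_csInf hne₂ ?_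
  rintro x ⟨θ, hθ, rfl⟩
  calc sInf {x : ℝ | ∃ θ : ℝ, φ₁ ≤ θ ∧ x = RM M φ₁ θ}
      ≤ RM M φ₁ θ := csInf_le hbdd ⟨θ, le_trans h12 hθ, rfl⟩
    _ ≤ RM M φ₂ θ := key θ hθ
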